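/- (Sudakov corollary for the l1 ball) For any δ > 0 and d ≥ 2, the logarithm of the δ-covering number of the l1 ball B₁ᵈ(r) in the Euclidean norm is at most 16 r² log(d) / δ². -/

import Mathlib

noncomputable def coveringNumber {α : Type*} [PseudoMetricSpace α] (δ : ℝ) (T : Set α) : ℕ∞ :=
  ⨅ (S : Finset α) (_ : ↑S ⊆ T ∧ ∀ x ∈ T, ∃ y ∈ S, dist x y ≤ δ), (S.card : ℕ∞)

def l1Ball (d : ℕ) (r : ℝ) : Set (EuclideanSpace ℝ (Fin d)) := {x | ∑ i, |x i| ≤ r}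


def stepv {d : ℕ} (o : Option (Fin d × Bool)) : Fin d → ℤ :=
  fun i => match o with
  | none => 0
  | some (j, b) => if i = j then (if b then 1 else -1) else 0

lemma stepv_abs_sum {d : ℕ} (o : Option (Fin d × Bool)) : ∑ i, |stepv o i| ≤ 1 := by
  match o with
  | none => simp [stepv]
  | some (j, b) =>
    have : ∀ i, |stepv (some (j,b)) i| = if i = j then 1 else 0 := by
      intro i; by_cases h : i = j <;> cases b <;> simp [stepv, h]
    simp [this]

lemma repr_lemma {d : ℕ} : ∀ (n : ℕ) (z : Fin d → ℤ), (∑ i, |z i|) ≤ n →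
    ∃ w : Fin n → Option (Fin d × Bool), ∀ i, z i = ∑ t, stepv (w t) i := by
  intro n
  induction n with
  | zero =>
    intro z hz
    refine ⟨Fin.elim0, fun i => ?_⟩
    have h0 : |z i| ≤ 0 := le_trans (Finset.single_le_sum (f := fun j => |z j|) (fun j _ => abs_nonneg _) (Finset.mem_univ i)) (by exact_mod_cast hz)
    have : z i = 0 := abs_eq_zero.mp (le_antisymm h0 (abs_nonneg _))
    simp [this]
  | succ n ih =>
    intro z hz
    by_cases hz0 : z = 0
    · exact ⟨fun _ => none, fun i => by simp [hz0, stepv]⟩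
    · obtain ⟨i, hi⟩ := Function.ne_iff.mp hz0
      have hi' : z i ≠ 0 := hi
      set z' : Fin d → ℤ := Function.update z i (z i - Int.sign (z i)) with hz'
      have habs : |z i - Int.sign (z i)| = |z i| - 1 := by
        rcases lt_trichotomy (z i) 0 with h | h | h
        · rw [abs_of_nonpos (by omega : z i ≤ 0), Int.sign_eq_neg_one_of_neg h]
          rw [abs_of_nonpos (by omega)]; ring
        · exact absurd h hi'
        · rw [abs_of_pos h, Int.sign_eq_one_of_pos h, abs_of_nonneg (by omega)]
      have hupd : (fun j => |z' j|) = Function.update (fun j => |z j|) i (|z i| - 1) := by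
        funext j
        by_cases h : j = i <;> simp [hz', Function.update, h, habs]
      have hsum' : (∑ j, |z' j|) ≤ n := by
        have h1 : (∑ j, |z' j|) = (|z i| - 1) + ∑ j ∈ Finset.univ \ {i}, |z j| := by
          rw [hupd, Finset.sum_update_of_mem (Finset.mem_univ i)]
        have h2 : (∑ j, |z j|) = |z i| + ∑ j ∈ Finset.univ \ {i}, |z j| :=
          Finset.sum_eq_add_sum_sdiff_singleton_of_mem (Finset.mem_univ i) _
        have : ((n:ℤ) + 1 : ℤ) = ((n+1 : ℕ) : ℤ) := by push_cast; ring
        omega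
      obtain ⟨w', hw'⟩ := ih z' hsum'
      refine ⟨Fin.cons (some (i, 0 < z i)) w', fun j => ?_⟩
      rw [Fin.sum_univ_succ]
      simp only [Fin.cons_zero, Fin.cons_succ]
      by_cases h : j = i
      · subst h
        have hz'j : z' j = z j - Int.sign (z j) := by simp [hz']
        have hstep : stepv (some (j, 0 < z j)) j = Int.sign (z j) := by
          rcases lt_trichotomy (z j) 0 with hc | hc | hc
          · simp [stepv, not_lt.mpr (le_of_lt hc), Int.sign_eq_neg_one_of_neg hc, hc.not_gt]
          · exact absurd hc hi'
          · simp [stepv, hc, Int.sign_eq_one_of_pos hc]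
        rw [hstep, ← hw' j, hz'j]; ring
      · have hz'j : z' j = z j := by simp [hz', Function.update, h]
        have hstep : stepv (some (i, 0 < z i)) j = 0 := by simp [stepv, h]
        rw [hstep, ← hw' j, hz'j, zero_add]

noncomputable def netFun (d k : ℕ) (r : ℝ) (w : Fin k → Option (Fin d × Bool)) :
    EuclideanSpace ℝ (Fin d) :=
  WithLp.toLp 2 (fun i => (r / k) * ((∑ t, stepv (w t) i : ℤ) : ℝ))

lemma netFun_mem (d k : ℕ) (hk : 1 ≤ k) (r : ℝ) (hr : 0 < r)
    (w : Fin k → Option (Fin d × Bool)) : netFun d k r w ∈ l1Ball d r := by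
  have hk' : (0:ℝ) < k := by exact_mod_cast hk
  have hbd : (∑ i, |(∑ t, stepv (w t) i : ℤ)| : ℤ) ≤ k := by
    calc (∑ i, |(∑ t, stepv (w t) i : ℤ)| : ℤ)
        ≤ ∑ i, ∑ t, |stepv (w t) i| := by
          exact Finset.sum_le_sum (fun i _ => Finset.abs_sum_le_sum_abs _ _)
      _ = ∑ t, ∑ i, |stepv (w t) i| := Finset.sum_comm
      _ ≤ ∑ _t : Fin k, 1 := Finset.sum_le_sum (fun t _ => stepv_abs_sum (w t))
      _ = k := by simp
  show (∑ i, |netFun d k r w i|) ≤ r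
  have : ∀ i, |netFun d k r w i| = (r / k) * |((∑ t, stepv (w t) i : ℤ) : ℝ)| := by
    intro i
    rw [show netFun d k r w i = (r / k) * ((∑ t, stepv (w t) i : ℤ) : ℝ) from rfl,
      abs_mul, abs_of_pos (by positivity)]
  rw [Finset.sum_congr rfl (fun i _ => this i), ← Finset.mul_sum]
  have hcast : (∑ i, |((∑ t, stepv (w t) i : ℤ) : ℝ)|) ≤ (k : ℝ) := by
    have := hbd
    push_cast at this ⊢
    exact_mod_cast this
  calc (r / k) * ∑ i, |((∑ t, stepv (w t) i : ℤ) : ℝ)| ≤ (r / k) * k := by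
        apply mul_le_mul_of_nonneg_left hcast (by positivity)
    _ = r := by field_simp

lemma net_covers (d k : ℕ) (hk : 1 ≤ k) (r δ : ℝ) (hr : 0 < r) (hδ : 0 < δ)
    (hkδ : r ^ 2 ≤ k * δ ^ 2) (x : EuclideanSpace ℝ (Fin d)) (hx : ∑ i, |x i| ≤ r) :
    ∃ w : Fin k → Option (Fin d × Bool), dist x (netFun d k r w) ≤ δ := by
  have hk' : (0:ℝ) < k := by exact_mod_cast hk
  set m : Fin d → ℤ := fun i => ⌊|x i| * k / r⌋ with hm
  have hm0 : ∀ i, 0 ≤ m i := fun i => Int.floor_nonneg.mpr (by positivity)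
  set z : Fin d → ℤ := fun i => if 0 ≤ x i then m i else -m i with hzdef
  have habsz : ∀ i, |z i| = m i := by
    intro i
    by_cases h : 0 ≤ x i <;> simp [hzdef, h, abs_of_nonneg (hm0 i), abs_of_nonpos (neg_nonpos.mpr (hm0 i))]
  have hzsum : (∑ i, |z i|) ≤ (k:ℤ) := by
    have hreal : ((∑ i, m i : ℤ) : ℝ) ≤ k := by
      push_cast
      calc (∑ i, (⌊|x i| * k / r⌋ : ℝ)) ≤ ∑ i, |x i| * k / r :=
            Finset.sum_le_sum (fun i _ => Int.floor_le _)
        _ = (∑ i, |x i|) * k / r := by rw [← Finset.sum_div, ← Finset.sum_mul]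
        _ ≤ r * k / r := by gcongr
        _ = k := by field_simp
    rw [Finset.sum_congr rfl (fun i _ => habsz i)]
    exact_mod_cast hreal
  obtain ⟨w, hw⟩ := repr_lemma k z hzsum
  refine ⟨w, ?_⟩
  set y := netFun d k r w with hy
  have hyi : ∀ i, y i = (r / k) * (z i : ℝ) := by
    intro i; rw [hy, show netFun d k r w i = (r/k) * ((∑ t, stepv (w t) i : ℤ) : ℝ) from rfl, ← hw i]
  have key : ∀ i, |x i - y i| ≤ r / k ∧ |x i - y i| ≤ |x i| := by
    intro i
    have hfl : (m i : ℝ) ≤ |x i| * k / r := Int.floor_le _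
    have hfl' : |x i| * k / r < m i + 1 := Int.lt_floor_add_one _
    have hrk : (0:ℝ) < r / k := by positivity
    have hup : (r / k) * (m i : ℝ) ≤ |x i| := by
      have := mul_le_mul_of_nonneg_left hfl (le_of_lt hrk)
      calc (r/k) * (m i : ℝ) ≤ (r/k) * (|x i| * k / r) := this
        _ = |x i| := by field_simp
    have hlo : |x i| - (r / k) * (m i : ℝ) < r / k := by
      have := mul_lt_mul_of_pos_left hfl' hrk
      have h2 : (r/k) * (|x i| * k / r) = |x i| := by field_simp
      nlinarith
    have hmnn : (0:ℝ) ≤ (r/k) * (m i : ℝ) := by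
      have : (0:ℝ) ≤ (m i : ℝ) := by exact_mod_cast hm0 i
      positivity
    by_cases h : 0 ≤ x i
    · have hyi' : y i = (r/k) * (m i : ℝ) := by rw [hyi i, hzdef]; simp [h]
      have hax : |x i| = x i := abs_of_nonneg h
      rw [hyi']
      constructor
      · rw [abs_of_nonneg (by rw [hax] at hup; linarith)]
        rw [hax] at hlo; linarith
      · rw [abs_of_nonneg (by rw [hax] at hup; linarith), hax]; linarith
    · push_neg at h
      have hyi' : y i = -((r/k) * (m i : ℝ)) := by
        rw [hyi i, hzdef]; simp [not_le.mpr h]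
      have hax : |x i| = -x i := abs_of_neg h
      rw [hyi']
      constructor
      · rw [abs_of_nonpos (by rw [hax] at hup; linarith)]
        rw [hax] at hlo; linarith
      · rw [abs_of_nonpos (by rw [hax] at hup; linarith), hax]; linarith
  have hsumsq : (∑ i, (x i - y i) ^ 2) ≤ δ ^ 2 := by
    calc (∑ i, (x i - y i) ^ 2) ≤ ∑ i, (r / k) * |x i - y i| := by
          apply Finset.sum_le_sum
          intro i _
          have h1 := (key i).1
          have h2 := (key i).2
          calc (x i - y i)^2 = |x i - y i| * |x i - y i| := by rw [← sq_abs, sq]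
            _ ≤ (r/k) * |x i - y i| := mul_le_mul_of_nonneg_right h1 (abs_nonneg _)
      _ = (r / k) * ∑ i, |x i - y i| := by rw [Finset.mul_sum]
      _ ≤ (r / k) * ∑ i, |x i| := by
          apply mul_le_mul_of_nonneg_left (Finset.sum_le_sum (fun i _ => (key i).2)) (by positivity)
      _ ≤ (r / k) * r := mul_le_mul_of_nonneg_left hx (by positivity)
      _ = r ^ 2 / k := by ring
      _ ≤ δ ^ 2 := by rw [div_le_iff₀ hk']; linarith
  rw [EuclideanSpace.dist_eq]
  have : ∀ i, dist (x i) (y i) ^ 2 = (x i - y i)^2 := by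
    intro i; rw [Real.dist_eq, sq_abs]
  rw [Finset.sum_congr rfl (fun i _ => this i)]
  calc Real.sqrt (∑ i, (x i - y i)^2) ≤ Real.sqrt (δ^2) := Real.sqrt_le_sqrt hsumsq
    _ = δ := Real.sqrt_sq (le_of_lt hδ)

lemma coveringNumber_le_card {α : Type*} [PseudoMetricSpace α] {δ : ℝ} {T : Set α} (S : Finset α)
    (h : ↑S ⊆ T ∧ ∀ x ∈ T, ∃ y ∈ S, dist x y ≤ δ) : coveringNumber δ T ≤ (S.card : ℕ∞) :=
  iInf₂_le S h

/-- Sudakov corollary: `log N(δ, B₁ᵈ(r), ‖·‖₂) ≤ 16 r² log d / δ²` for `d ≥ 2`. -/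
theorem sudakov_covering_l1_ball (d : ℕ) (hd : 2 ≤ d) (r δ : ℝ) (hr : 0 < r) (hδ : 0 < δ) :
    coveringNumber δ (l1Ball d r) ≠ ⊤ ∧
      Real.log ((coveringNumber δ (l1Ball d r)).toNat) ≤
        16 * r ^ 2 * Real.log d / δ ^ 2 := by

  classical
  have hd1 : (1:ℝ) ≤ d := by exact_mod_cast le_trans one_le_two hd
  have hL : 0 ≤ Real.log d := Real.log_nonneg hd1
  have hRHS : 0 ≤ 16 * r ^ 2 * Real.log d / δ ^ 2 :=
    div_nonneg (mul_nonneg (by positivity) hL) (by positivity)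
  by_cases hc : r ≤ δ
  · -- singleton net
    have hnet : (↑({0} : Finset (EuclideanSpace ℝ (Fin d))) ⊆ l1Ball d r) ∧
        ∀ x ∈ l1Ball d r, ∃ y ∈ ({0} : Finset (EuclideanSpace ℝ (Fin d))), dist x y ≤ δ := by
      constructor
      · intro y hy
        simp only [Finset.coe_singleton, Set.mem_singleton_iff] at hy
        subst hy
        show (∑ i, |(0 : EuclideanSpace ℝ (Fin d)) i|) ≤ r
        simp [hr.le]
      · intro x hx
        refine ⟨0, Finset.mem_singleton_self 0, ?_⟩
        have hx' : (∑ i, |x i|) ≤ r := hx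
        have hsnn : (0:ℝ) ≤ ∑ i, |x i| := Finset.sum_nonneg (fun i _ => abs_nonneg _)
        have hsq : (∑ i, |x i| ^ 2) ≤ r ^ 2 := by
          calc (∑ i, |x i| ^ 2) ≤ ∑ i, |x i| * (∑ j, |x j|) := by
                apply Finset.sum_le_sum
                intro i _
                rw [sq]
                exact mul_le_mul_of_nonneg_left
                  (Finset.single_le_sum (f := fun j => |x j|) (fun j _ => abs_nonneg _)
                    (Finset.mem_univ i)) (abs_nonneg _)
            _ = (∑ i, |x i|) * (∑ j, |x j|) := by rw [← Finset.sum_mul]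
            _ ≤ r * r := mul_le_mul hx' hx' hsnn hr.le
            _ = r ^ 2 := (sq r).symm
        rw [EuclideanSpace.dist_eq]
        have heq : ∀ i, dist (x i) ((0 : EuclideanSpace ℝ (Fin d)) i) ^ 2 = |x i| ^ 2 := by
          intro i
          have : (0 : EuclideanSpace ℝ (Fin d)) i = 0 := rfl
          rw [this, Real.dist_eq, sub_zero]
        rw [Finset.sum_congr rfl (fun i _ => heq i)]
        calc Real.sqrt (∑ i, |x i| ^ 2) ≤ Real.sqrt (r ^ 2) := Real.sqrt_le_sqrt hsq
          _ = r := Real.sqrt_sq hr.le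
          _ ≤ δ := hc
    have hle := coveringNumber_le_card _ hnet
    simp only [Finset.card_singleton, Nat.cast_one] at hle
    have hne : coveringNumber δ (l1Ball d r) ≠ ⊤ := by
      intro h; rw [h] at hle; exact absurd hle (by simp)
    refine ⟨hne, ?_⟩
    have htn : (coveringNumber δ (l1Ball d r)).toNat ≤ 1 := by
      lift coveringNumber δ (l1Ball d r) to ℕ using hne with n hn
      simpa using hle
    interval_cases h : (coveringNumber δ (l1Ball d r)).toNat <;> simpa [h] using hRHS
  · -- grid net
    push_neg at hc
    set k : ℕ := ⌈r ^ 2 / δ ^ 2⌉₊ with hkdef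
    have hratio : (1:ℝ) ≤ r ^ 2 / δ ^ 2 := by
      rw [le_div_iff₀ (by positivity)]
      nlinarith
    have hk : 1 ≤ k := by
      rw [hkdef]
      exact_mod_cast Nat.one_le_ceil_iff.mpr (lt_of_lt_of_le zero_lt_one hratio)
    have hkδ : r ^ 2 ≤ (k:ℝ) * δ ^ 2 := by
      have := Nat.le_ceil (r ^ 2 / δ ^ 2)
      rw [div_le_iff₀ (by positivity)] at this
      exact this.trans_eq rfl
    have hkub : (k:ℝ) ≤ 2 * r ^ 2 / δ ^ 2 := by
      have h1 : (k:ℝ) < r ^ 2 / δ ^ 2 + 1 := Nat.ceil_lt_add_one (by positivity)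
      have : r ^ 2 / δ ^ 2 + 1 ≤ 2 * r ^ 2 / δ ^ 2 := by
        rw [show 2 * r ^ 2 / δ ^ 2 = r ^ 2 / δ ^ 2 + r ^ 2 / δ ^ 2 by ring]
        linarith
      linarith
    set S : Finset (EuclideanSpace ℝ (Fin d)) :=
      Finset.image (netFun d k r) Finset.univ with hS
    have hnet : (↑S ⊆ l1Ball d r) ∧ ∀ x ∈ l1Ball d r, ∃ y ∈ S, dist x y ≤ δ := by
      constructor
      · intro y hy
        simp only [hS, Finset.coe_image, Set.mem_image] at hy
        obtain ⟨w, _, rfl⟩ := hy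
        exact netFun_mem d k hk r hr w
      · intro x hx
        obtain ⟨w, hw⟩ := net_covers d k hk r δ hr hδ hkδ x hx
        exact ⟨netFun d k r w, Finset.mem_image_of_mem _ (Finset.mem_univ w), hw⟩
    have hcard : S.card ≤ (2 * d + 1) ^ k := by
      calc S.card ≤ (Finset.univ : Finset (Fin k → Option (Fin d × Bool))).card :=
            Finset.card_image_le
        _ = (2 * d + 1) ^ k := by
            rw [Finset.card_univ]
            simp [Fintype.card_fun]
            ring_nf
    have hle := coveringNumber_le_card _ hnet
    have hne : coveringNumber δ (l1Ball d r) ≠ ⊤ := by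
      intro h; rw [h] at hle; exact absurd hle (by simp)
    refine ⟨hne, ?_⟩
    have htn : (coveringNumber δ (l1Ball d r)).toNat ≤ (2 * d + 1) ^ k := by
      lift coveringNumber δ (l1Ball d r) to ℕ using hne with n hn
      have : n ≤ S.card := by exact_mod_cast hle
      simpa using this.trans hcard
    set n : ℕ := (coveringNumber δ (l1Ball d r)).toNat with hn
    rcases Nat.eq_zero_or_pos n with h0 | hpos
    · rw [h0]; simpa using hRHS
    · have hlog1 : Real.log n ≤ Real.log ((2 * d + 1) ^ k : ℕ) := by
        apply Real.log_le_log (by exact_mod_cast hpos)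
        exact_mod_cast htn
      have hlog2 : Real.log ((2 * d + 1) ^ k : ℕ) = k * Real.log (2 * d + 1 : ℕ) := by
        push_cast
        rw [Real.log_pow]
      have h2d : ((2 * d + 1 : ℕ) : ℝ) ≤ (d : ℝ) ^ 3 := by
        have hd' : (2:ℝ) ≤ d := by exact_mod_cast hd
        push_cast
        have h1 : 2*(d:ℝ)^2 ≤ (d:ℝ)^3 := by nlinarith
        have h2 : 2*(d:ℝ)+1 ≤ 2*(d:ℝ)^2 := by nlinarith
        linarith
      have hlog3 : Real.log (2 * d + 1 : ℕ) ≤ 3 * Real.log d := by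
        calc Real.log (2 * d + 1 : ℕ) ≤ Real.log ((d:ℝ) ^ 3) := by
              apply Real.log_le_log (by positivity) h2d
          _ = 3 * Real.log d := by rw [Real.log_pow]; push_cast; ring
      calc Real.log n ≤ k * Real.log (2 * d + 1 : ℕ) := by rw [← hlog2]; exact hlog1
        _ ≤ (k:ℝ) * (3 * Real.log d) := by
            apply mul_le_mul_of_nonneg_left hlog3 (by positivity)
        _ ≤ (2 * r ^ 2 / δ ^ 2) * (3 * Real.log d) := by
            apply mul_le_mul_of_nonneg_right hkub (by positivity)
        _ ≤ 16 * r ^ 2 * Real.log d / δ ^ 2 := by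
            rw [div_mul_eq_mul_div, div_le_div_iff₀ (by positivity) (by positivity)]
            nlinarith [mul_nonneg (mul_nonneg (sq_nonneg r) hL) (sq_nonneg δ)]
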